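/- Let δ, ε₀ > 0 be constants and set C = √(1/2 + (1/2)·((2+δ)/ε₀)²). Let γ₁ = u(α₁,β₁) and γ₂ = u(α₂,β₂) be special unitary 2×2 matrices (so αℓ, βℓ ∈ ℂ with |αℓ|² + |βℓ|² = 1). Suppose | |α₁| − |α₂| | < ε for some ε with 0 < ε < δ, and min{|α₁|, |α₂|} < √(1 − ε₀²). Define θ₁ = (arg α₁ − arg α₂ + arg β₁ − arg β₂)/2 and θ₂ = (arg α₁ − arg α₂ − arg β₁ + arg β₂)/2, where arg is the principal argument (with arg 0 = 0). Then d(γ₁, u(θ₁)·γ₂·u(θ₂)) < C·ε. -/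

import Mathlib

open Matrix

/-- The special unitary matrix `u(α,β) = [[α, β], [-conj β, conj α]]`. -/
noncomputable def umat (α β : ℂ) : Matrix (Fin 2) (Fin 2) ℂ :=
  !![α, β; -(starRingEnd ℂ) β, (starRingEnd ℂ) α]

/-- The diagonal unitary `u(θ) = diag(e^{iθ}, e^{-iθ})`. -/
noncomputable def udiag (θ : ℝ) : Matrix (Fin 2) (Fin 2) ℂ :=
  umat (Complex.exp (θ * Complex.I)) 0

/-- The bi-invariant metric `d(A,B) = √(1 - |tr(A*B)|/2)` on `U(2)`. -/
noncomputable def dU (A B : Matrix (Fin 2) (Fin 2) ℂ) : ℝ :=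
  Real.sqrt (1 - ‖Matrix.trace (Aᴴ * B)‖ / 2)

lemma polar_cancel (r s a b : ℝ) :
    (starRingEnd ℂ) (↑r * Complex.exp (↑a * Complex.I)) *
      Complex.exp ((↑a - ↑b) * Complex.I) * (↑s * Complex.exp (↑b * Complex.I)) = (↑r * ↑s : ℂ) := by
  rw [_root_.map_mul, Complex.conj_ofReal, ← Complex.exp_conj]
  simp only [_root_.map_mul, Complex.conj_ofReal, Complex.conj_I]
  rw [show (↑r : ℂ) * Complex.exp (↑a * -Complex.I) * Complex.exp ((↑a - ↑b) * Complex.I) *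
      (↑s * Complex.exp (↑b * Complex.I)) =
      (↑r : ℂ) * ↑s * (Complex.exp (↑a * -Complex.I) * Complex.exp ((↑a - ↑b) * Complex.I) *
        Complex.exp (↑b * Complex.I)) from by ring,
    ← Complex.exp_add, ← Complex.exp_add]
  ring_nf
  simp

lemma key_term (z w : ℂ) :
    (starRingEnd ℂ) z * Complex.exp ((↑(z.arg - w.arg)) * Complex.I) * w =
      ((‖z‖ * ‖w‖ : ℝ) : ℂ) := by
  have hz := Complex.norm_mul_exp_arg_mul_I z
  have hw := Complex.norm_mul_exp_arg_mul_I w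
  calc (starRingEnd ℂ) z * Complex.exp ((↑(z.arg - w.arg)) * Complex.I) * w
      = (starRingEnd ℂ) (↑(‖z‖) * Complex.exp (↑z.arg * Complex.I)) *
        Complex.exp ((↑z.arg - ↑w.arg) * Complex.I) *
        (↑(‖w‖) * Complex.exp (↑w.arg * Complex.I)) := by rw [hz, hw]; push_cast; ring_nf
    _ = _ := by rw [polar_cancel]; push_cast; ring

lemma key_term' (z w : ℂ) :
    z * (starRingEnd ℂ) (Complex.exp ((↑(z.arg - w.arg)) * Complex.I) * w) =
      ((‖z‖ * ‖w‖ : ℝ) : ℂ) := by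
  have : (starRingEnd ℂ) ((starRingEnd ℂ) z * (Complex.exp ((↑(z.arg - w.arg)) * Complex.I) * w))
      = z * (starRingEnd ℂ) (Complex.exp ((↑(z.arg - w.arg)) * Complex.I) * w) := by
    rw [_root_.map_mul, Complex.conj_conj]
  rw [← this, ← mul_assoc, key_term, Complex.conj_ofReal]

lemma realineq (δ ε₀ ε r₁ s₁ r₂ s₂ : ℝ) (hδ : 0<δ) (hε₀ : 0<ε₀) (hε : 0<ε)
    (hr₁ : 0≤r₁) (hs₁ : 0 ≤ s₁) (hr₂ : 0≤r₂) (hs₂ : 0 ≤ s₂)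
    (h1 : r₁^2+s₁^2=1) (h2 : r₂^2+s₂^2=1)
    (hclose : |r₁-r₂| < ε) (hmin : min r₁ r₂ < Real.sqrt (1-ε₀^2)) :
    1 - (r₁*r₂+s₁*s₂) < (1/2 + 1/2*((2+δ)/ε₀)^2) * ε^2 := by
  have hcl := abs_lt.mp hclose
  have hs_of : ∀ r s : ℝ, 0 ≤ r → 0 ≤ s → r^2+s^2=1 → r < Real.sqrt (1-ε₀^2) → ε₀ < s := by
    intro r s hr hs h hlt
    have h0 : r^2 < 1-ε₀^2 := (Real.lt_sqrt hr).mp hlt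
    nlinarith
  have hssum : ε₀ < s₁ + s₂ := by
    rcases min_lt_iff.mp hmin with h | h
    · have := hs_of r₁ s₁ hr₁ hs₁ h1 h; linarith
    · have := hs_of r₂ s₂ hr₂ hs₂ h2 h; linarith
  have hr1le : r₁ ≤ 1 := by nlinarith
  have hr2le : r₂ ≤ 1 := by nlinarith
  have hd2 : (r₁-r₂)^2 < ε^2 := by nlinarith [hcl.1, hcl.2]
  have e1 : (s₁-s₂)^2 * (s₁+s₂)^2 = (r₁-r₂)^2 * (r₁+r₂)^2 := by
    linear_combination (s₁^2 - s₂^2 - r₁^2 + r₂^2) * (h1 - h2)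
  have h4 : (r₁+r₂)^2 ≤ 4 := by nlinarith
  have heps : ε₀^2 ≤ (s₁+s₂)^2 := by nlinarith
  have step1 : (s₁-s₂)^2 * ε₀^2 ≤ (s₁-s₂)^2 * (s₁+s₂)^2 :=
    mul_le_mul_of_nonneg_left heps (sq_nonneg (s₁-s₂))
  have step2 : (r₁-r₂)^2 * (r₁+r₂)^2 ≤ ε^2 * 4 :=
    mul_le_mul hd2.le h4 (sq_nonneg _) (sq_nonneg _)
  have hkey : (s₁-s₂)^2 * ε₀^2 ≤ ε^2 * 4 := by linarith
  have hp : 0 < δ*(4+δ)*ε^2 := by positivity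
  have h5' : ε^2*4 < (2+δ)^2*ε^2 := by
    have hexp : (2+δ)^2*ε^2 = ε^2*4 + δ*(4+δ)*ε^2 := by ring
    linarith [hp]
  have h5 : (s₁-s₂)^2 * ε₀^2 < (2+δ)^2 * ε^2 := lt_of_le_of_lt hkey h5'
  have h6 : (s₁-s₂)^2 < ((2+δ)/ε₀)^2 * ε^2 := by
    rw [div_pow]
    rw [show (2+δ)^2 / ε₀^2 * ε^2 = (2+δ)^2 * ε^2 / ε₀^2 from by ring]
    exact (lt_div_iff₀ (by positivity)).mpr h5
  have hid : 1 - (r₁*r₂+s₁*s₂) = ((r₁-r₂)^2+(s₁-s₂)^2)/2 := by linear_combination -h1/2 - h2/2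
  rw [hid]; linarith

theorem stmt0 (δ ε₀ : ℝ) (hδ : 0 < δ) (hε₀ : 0 < ε₀)
    (C : ℝ) (hC : C = Real.sqrt (1/2 + 1/2 * ((2 + δ) / ε₀)^2))
    (α₁ β₁ α₂ β₂ : ℂ)
    (h1 : ‖α₁‖ ^ 2 + ‖β₁‖ ^ 2 = 1)
    (h2 : ‖α₂‖ ^ 2 + ‖β₂‖ ^ 2 = 1)
    (ε : ℝ) (hε : 0 < ε) (hεδ : ε < δ)
    (hclose : |‖α₁‖ - ‖α₂‖| < ε)
    (hmin : min ‖α₁‖ ‖α₂‖ < Real.sqrt (1 - ε₀^2))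
    (θ₁ θ₂ : ℝ)
    (hθ₁ : θ₁ = (α₁.arg - α₂.arg + β₁.arg - β₂.arg) / 2)
    (hθ₂ : θ₂ = (α₁.arg - α₂.arg - β₁.arg + β₂.arg) / 2) :
    dU (umat α₁ β₁) (udiag θ₁ * umat α₂ β₂ * udiag θ₂) < C * ε := by
  set X : ℝ := ‖α₁‖ * ‖α₂‖ + ‖β₁‖ * ‖β₂‖ with hX
  have e1 : Complex.exp (↑θ₁*Complex.I) * Complex.exp (↑θ₂*Complex.I)
      = Complex.exp ((↑(α₁.arg - α₂.arg)) * Complex.I) := by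
    rw [← Complex.exp_add]; congr 1; push_cast; rw [hθ₁, hθ₂]; push_cast; ring
  have e2 : Complex.exp (↑θ₁*Complex.I) * (starRingEnd ℂ) (Complex.exp (↑θ₂*Complex.I))
      = Complex.exp ((↑(β₁.arg - β₂.arg)) * Complex.I) := by
    rw [← Complex.exp_conj, ← Complex.exp_add]; congr 1
    simp only [_root_.map_mul, Complex.conj_ofReal, Complex.conj_I]
    push_cast; rw [hθ₁, hθ₂]; push_cast; ring
  have htr0 : Matrix.trace ((umat α₁ β₁)ᴴ * (udiag θ₁ * umat α₂ β₂ * udiag θ₂)) =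
      (starRingEnd ℂ) α₁ * (Complex.exp (↑θ₁*Complex.I) * Complex.exp (↑θ₂*Complex.I) * α₂)
      + α₁ * (starRingEnd ℂ) (Complex.exp (↑θ₁*Complex.I) * Complex.exp (↑θ₂*Complex.I) * α₂)
      + (starRingEnd ℂ) β₁ * (Complex.exp (↑θ₁*Complex.I) * (starRingEnd ℂ) (Complex.exp (↑θ₂*Complex.I)) * β₂)
      + β₁ * (starRingEnd ℂ) (Complex.exp (↑θ₁*Complex.I) * (starRingEnd ℂ) (Complex.exp (↑θ₂*Complex.I)) * β₂) := by
    simp [umat, udiag, Matrix.trace_fin_two, Matrix.mul_apply, Fin.sum_univ_two,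
      Matrix.conjTranspose_apply]
    ring
  have htr : Matrix.trace ((umat α₁ β₁)ᴴ * (udiag θ₁ * umat α₂ β₂ * udiag θ₂)) =
      ((2 * X : ℝ) : ℂ) := by
    rw [htr0, e1, e2, ← mul_assoc ((starRingEnd ℂ) α₁), ← mul_assoc ((starRingEnd ℂ) β₁),
      key_term α₁ α₂, key_term β₁ β₂, key_term' α₁ α₂, key_term' β₁ β₂]
    push_cast [hX]; ring
  have hXnn : 0 ≤ X := by positivity
  have habs : ‖(((2 * X : ℝ) : ℂ))‖ = 2 * X := by
    rw [Complex.norm_real, Real.norm_eq_abs, abs_of_nonneg (by positivity)]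
  have hCpos : 0 < C := by rw [hC]; exact Real.sqrt_pos.mpr (by positivity)
  have hC2 : C^2 = 1/2 + 1/2 * ((2 + δ) / ε₀)^2 := by
    rw [hC, Real.sq_sqrt (by positivity)]
  rw [dU, htr, habs]
  rw [Real.sqrt_lt' (mul_pos hCpos hε)]
  have hmain := realineq δ ε₀ ε (‖α₁‖) (‖β₁‖) (‖α₂‖)
    (‖β₂‖) hδ hε₀ hε (norm_nonneg _) (norm_nonneg _)
    (norm_nonneg _) (norm_nonneg _) h1 h2 hclose hmin
  rw [mul_pow, hC2]
  rw [show 1 - 2 * X / 2 = 1 - X from by ring, hX]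
  linarith [hmain]
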